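/- Let b > 0 and let f₁, f₂ : [0, b] → ℝ be continuous functions with f₁(0) = f₂(0) = 0, f₁(x) < f₂(x) for all x ∈ (0, b], and (f₂(x) − f₁(x))/x → 0 as x → 0⁺ (the two graphs share a common tangent at the origin). Let X = {(x, f₁(x)) : x ∈ [0, b]} ∪ {(x, f₂(x)) : x ∈ [0, b]} ⊆ ℝ². Then the origin lies in the closure of the medial axis of X: for every δ > 0 there exists a point w ∈ M_X with ‖w‖ < δ. Moreover such w may be chosen of the form w = (x₀, y₀) with x₀ ∈ (0, δ) and f₁(x₀) < y₀ < f₂(x₀). -/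

import Mathlib

open Filter Set
open Topology

/-- The point of the Euclidean plane with coordinates `x`, `y`. -/
noncomputable def pt (x y : ℝ) : EuclideanSpace ℝ (Fin 2) :=
  (EuclideanSpace.equiv (Fin 2) ℝ).symm ![x, y]

/-- The set of points of `X` closest to `x`. -/
def nearestPoints (X : Set (EuclideanSpace ℝ (Fin 2)))
    (x : EuclideanSpace ℝ (Fin 2)) : Set (EuclideanSpace ℝ (Fin 2)) :=
  {y ∈ X | ‖y - x‖ = Metric.infDist x X}

/-- The medial axis of `X` : points outside `X` with at least two closest points in `X`. -/
def medialAxis (X : Set (EuclideanSpace ℝ (Fin 2))) : Set (EuclideanSpace ℝ (Fin 2)) :=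
  {x | x ∉ X ∧ ∃ y₁ ∈ nearestPoints X x, ∃ y₂ ∈ nearestPoints X x, y₁ ≠ y₂}

/-- If `X ⊆ ℝ²` is the union of the graphs over `[0, b]` of two continuous functions
`f₁ < f₂` (on `(0, b]`) vanishing at `0` and tangent to each other at the origin
(`(f₂ - f₁)(x) = o(x)`), then the origin lies in the closure of the medial axis of `X`;
moreover the medial axis points can be found between the two graphs, arbitrarily close
to the origin. -/
lemma pt_apply0 (x y : ℝ) : pt x y 0 = x := rfl
lemma pt_apply1 (x y : ℝ) : pt x y 1 = y := rfl

lemma dist_pt_pt (x y x' y' : ℝ) :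
    dist (pt x y) (pt x' y') = Real.sqrt ((x - x')^2 + (y - y')^2) := by
  rw [EuclideanSpace.dist_eq, Fin.sum_univ_two]
  simp [pt_apply0, pt_apply1, Real.dist_eq, sq_abs]

lemma dist_pt_same (x y y' : ℝ) : dist (pt x y) (pt x y') = |y - y'| := by
  rw [dist_pt_pt]
  simp [Real.sqrt_sq_eq_abs]

lemma pt_zero : pt 0 0 = 0 := by
  ext i
  fin_cases i <;> rfl

lemma norm_pt (x y : ℝ) : ‖pt x y‖ = Real.sqrt (x^2 + y^2) := by
  rw [← dist_zero_right, ← pt_zero, dist_pt_pt]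
  norm_num

lemma abs_le_norm_pt (x y : ℝ) : |x| ≤ ‖pt x y‖ := by
  rw [norm_pt]
  rw [← Real.sqrt_sq_eq_abs]
  exact Real.sqrt_le_sqrt (by nlinarith [sq_nonneg y])

lemma norm_pt_le (x y : ℝ) : ‖pt x y‖ ≤ |x| + |y| := by
  rw [norm_pt, ← Real.sqrt_sq (by positivity : (0:ℝ) ≤ |x| + |y|)]
  exact Real.sqrt_le_sqrt (by nlinarith [abs_nonneg x, abs_nonneg y, sq_abs x, sq_abs y])

lemma pt_inj {x y x' y' : ℝ} (h : pt x y = pt x' y') : x = x' ∧ y = y' :=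
  ⟨congrArg (fun v : EuclideanSpace ℝ (Fin 2) => v 0) h,
   congrArg (fun v : EuclideanSpace ℝ (Fin 2) => v 1) h⟩

lemma continuous_pt : Continuous fun p : ℝ × ℝ => pt p.1 p.2 := by
  apply Continuous.comp (EuclideanSpace.equiv (Fin 2) ℝ).symm.continuous
  exact continuous_pi fun i => by fin_cases i <;> simp [continuous_fst, continuous_snd]

theorem origin_mem_closure_medialAxis_of_tangent_graphs
    (b : ℝ) (hb : 0 < b) (f₁ f₂ : ℝ → ℝ)
    (hc₁ : ContinuousOn f₁ (Set.Icc 0 b)) (hc₂ : ContinuousOn f₂ (Set.Icc 0 b))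
    (h₁0 : f₁ 0 = 0) (h₂0 : f₂ 0 = 0)
    (hlt : ∀ x ∈ Set.Ioc (0 : ℝ) b, f₁ x < f₂ x)
    (htan : Tendsto (fun x => (f₂ x - f₁ x) / x) (nhdsWithin 0 (Set.Ioi 0)) (nhds 0)) :
    ∀ δ : ℝ, 0 < δ →
      ∃ w ∈ medialAxis
          ((fun x => pt x (f₁ x)) '' Set.Icc 0 b ∪ (fun x => pt x (f₂ x)) '' Set.Icc 0 b),
        ‖w‖ < δ ∧ ∃ x₀ y₀ : ℝ, 0 < x₀ ∧ x₀ < δ ∧ f₁ x₀ < y₀ ∧ y₀ < f₂ x₀ ∧ w = pt x₀ y₀ := by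
  intro δ hδ
  set X₁ : Set (EuclideanSpace ℝ (Fin 2)) := (fun x => pt x (f₁ x)) '' Set.Icc 0 b with hX₁
  set X₂ : Set (EuclideanSpace ℝ (Fin 2)) := (fun x => pt x (f₂ x)) '' Set.Icc 0 b with hX₂
  have hcont₁ : ContinuousOn (fun x => pt x (f₁ x)) (Set.Icc 0 b) :=
    continuous_pt.comp_continuousOn (continuousOn_id.prodMk hc₁)
  have hcont₂ : ContinuousOn (fun x => pt x (f₂ x)) (Set.Icc 0 b) :=
    continuous_pt.comp_continuousOn (continuousOn_id.prodMk hc₂)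
  have hcpt₁ : IsCompact X₁ := isCompact_Icc.image_of_continuousOn hcont₁
  have hcpt₂ : IsCompact X₂ := isCompact_Icc.image_of_continuousOn hcont₂
  have hne₁ : X₁.Nonempty := ⟨_, ⟨0, ⟨le_refl 0, hb.le⟩, rfl⟩⟩
  have hne₂ : X₂.Nonempty := ⟨_, ⟨0, ⟨le_refl 0, hb.le⟩, rfl⟩⟩
  have mem₁ : ∀ {x y : ℝ}, pt x y ∈ X₁ → x ∈ Set.Icc 0 b ∧ y = f₁ x := by
    rintro x y ⟨x', hx', hxy⟩
    obtain ⟨h1, h2⟩ := pt_inj hxy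
    subst h1
    exact ⟨hx', h2.symm⟩
  have mem₂ : ∀ {x y : ℝ}, pt x y ∈ X₂ → x ∈ Set.Icc 0 b ∧ y = f₂ x := by
    rintro x y ⟨x', hx', hxy⟩
    obtain ⟨h1, h2⟩ := pt_inj hxy
    subst h1
    exact ⟨hx', h2.symm⟩
  -- choose x₀ via eventual properties in 𝓝[>] 0
  have hle : 𝓝[>] (0:ℝ) ≤ 𝓝[Set.Icc 0 b] 0 :=
    nhdsWithin_le_of_mem (Filter.mem_of_superset (Ioo_mem_nhdsGT_of_mem ⟨le_refl 0, hb⟩)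
      Set.Ioo_subset_Icc_self)
  have h1 : Tendsto f₁ (𝓝[>] (0:ℝ)) (𝓝 0) := by
    have := hc₁ 0 ⟨le_refl 0, hb.le⟩
    rw [ContinuousWithinAt, h₁0] at this
    exact this.mono_left hle
  have h2 : Tendsto f₂ (𝓝[>] (0:ℝ)) (𝓝 0) := by
    have := hc₂ 0 ⟨le_refl 0, hb.le⟩
    rw [ContinuousWithinAt, h₂0] at this
    exact this.mono_left hle
  have e1 : ∀ᶠ x in 𝓝[>] (0:ℝ), |f₁ x| < δ/2 := by
    have := h1.eventually (eventually_abs_sub_lt 0 (by positivity : (0:ℝ) < δ/2))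
    simpa using this
  have e2 : ∀ᶠ x in 𝓝[>] (0:ℝ), |f₂ x| < δ/2 := by
    have := h2.eventually (eventually_abs_sub_lt 0 (by positivity : (0:ℝ) < δ/2))
    simpa using this
  have e3 : ∀ᶠ x in 𝓝[>] (0:ℝ), |(f₂ x - f₁ x)/x| < 1 := by
    have := htan.eventually (eventually_abs_sub_lt 0 one_pos)
    simpa using this
  have e4 : ∀ᶠ x in 𝓝[>] (0:ℝ), x ∈ Set.Ioo 0 (min b (δ/2)) :=
    Ioo_mem_nhdsGT_of_mem ⟨le_refl 0, lt_min hb (by positivity)⟩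
  obtain ⟨x₀, he1, he2, he3, he4⟩ := (e1.and (e2.and (e3.and e4))).exists
  obtain ⟨hx0, hx0'⟩ := he4
  have hxb : x₀ ≤ b := (lt_min_iff.mp hx0').1.le
  have hxδ : x₀ < δ/2 := (lt_min_iff.mp hx0').2
  have hx0mem : x₀ ∈ Set.Icc (0:ℝ) b := ⟨hx0.le, hxb⟩
  have hfs : f₁ x₀ < f₂ x₀ := hlt x₀ ⟨hx0, hxb⟩
  have hgap : f₂ x₀ - f₁ x₀ < x₀ := by
    have h := (abs_lt.mp he3).2
    rwa [div_lt_one hx0] at h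
  -- endpoints of the vertical segment
  have hp₁ : pt x₀ (f₁ x₀) ∈ X₁ := ⟨x₀, hx0mem, rfl⟩
  have hp₂ : pt x₀ (f₂ x₀) ∈ X₂ := ⟨x₀, hx0mem, rfl⟩
  have hp₁n : pt x₀ (f₁ x₀) ∉ X₂ := fun h => absurd (mem₂ h).2 hfs.ne
  have hp₂n : pt x₀ (f₂ x₀) ∉ X₁ := fun h => absurd (mem₁ h).2 hfs.ne'
  -- the sign-changing function
  set g : ℝ → ℝ := fun y => Metric.infDist (pt x₀ y) X₂ - Metric.infDist (pt x₀ y) X₁ with hg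
  have hcy : Continuous fun y : ℝ => pt x₀ y :=
    continuous_pt.comp (continuous_const.prodMk continuous_id)
  have hgc : Continuous g :=
    ((Metric.continuous_infDist_pt X₂).comp hcy).sub
      ((Metric.continuous_infDist_pt X₁).comp hcy)
  have hga : 0 < g (f₁ x₀) := by
    have h0 : Metric.infDist (pt x₀ (f₁ x₀)) X₁ = 0 := Metric.infDist_zero_of_mem hp₁
    have hp : 0 < Metric.infDist (pt x₀ (f₁ x₀)) X₂ :=
      (hcpt₂.isClosed.notMem_iff_infDist_pos hne₂).mp hp₁n
    simp only [hg, h0, sub_zero]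
    exact hp
  have hgb : g (f₂ x₀) < 0 := by
    have h0 : Metric.infDist (pt x₀ (f₂ x₀)) X₂ = 0 := Metric.infDist_zero_of_mem hp₂
    have hp : 0 < Metric.infDist (pt x₀ (f₂ x₀)) X₁ :=
      (hcpt₁.isClosed.notMem_iff_infDist_pos hne₁).mp hp₂n
    simp only [hg, h0, zero_sub]
    linarith
  -- intermediate value theorem
  obtain ⟨y₀, hy₀, hgy₀⟩ := intermediate_value_Ioo' hfs.le hgc.continuousOn
    (show (0:ℝ) ∈ Set.Ioo (g (f₂ x₀)) (g (f₁ x₀)) from ⟨hgb, hga⟩)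
  obtain ⟨hy₁, hy₂⟩ := hy₀
  set w : EuclideanSpace ℝ (Fin 2) := pt x₀ y₀ with hw
  have heq : Metric.infDist w X₂ = Metric.infDist w X₁ := by
    have : g y₀ = 0 := hgy₀
    simp only [hg] at this
    linarith
  -- the distance is small
  have hdsmall : Metric.infDist w X₁ < x₀ := by
    have h1 : Metric.infDist w X₁ ≤ dist w (pt x₀ (f₁ x₀)) :=
      Metric.infDist_le_dist_of_mem hp₁
    have h2 : dist w (pt x₀ (f₁ x₀)) = y₀ - f₁ x₀ := by
      rw [hw, dist_pt_same, abs_of_pos (by linarith)]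
    linarith
  -- infDist to the union
  have hXne : (X₁ ∪ X₂).Nonempty := hne₁.mono Set.subset_union_left
  have hunion : Metric.infDist w (X₁ ∪ X₂) = Metric.infDist w X₁ := by
    refine le_antisymm (Metric.infDist_le_infDist_of_subset Set.subset_union_left hne₁) ?_
    by_contra hcon
    push_neg at hcon
    obtain ⟨y, hy, hdy⟩ := (Metric.infDist_lt_iff hXne).mp hcon
    rcases hy with hy | hy
    · exact absurd hdy (not_lt.mpr (Metric.infDist_le_dist_of_mem hy))
    · exact absurd hdy (not_lt.mpr (heq ▸ Metric.infDist_le_dist_of_mem hy))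
  -- nearest points in each branch
  obtain ⟨q₁, hq₁X, hq₁d⟩ := hcpt₁.exists_infDist_eq_dist hne₁ w
  obtain ⟨q₂, hq₂X, hq₂d⟩ := hcpt₂.exists_infDist_eq_dist hne₂ w
  have hq₁near : q₁ ∈ nearestPoints (X₁ ∪ X₂) w :=
    ⟨Set.mem_union_left _ hq₁X, by rw [← dist_eq_norm, dist_comm, hunion, hq₁d]⟩
  have hq₂near : q₂ ∈ nearestPoints (X₁ ∪ X₂) w :=
    ⟨Set.mem_union_right _ hq₂X, by rw [← dist_eq_norm, dist_comm, hunion, ← heq, hq₂d]⟩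
  -- the two nearest points are distinct
  have hqne : q₁ ≠ q₂ := by
    intro h
    have hq₂X₁ : q₂ ∈ X₁ := h ▸ hq₁X
    obtain ⟨x', hx', hx'eq⟩ := hq₂X
    have hmem : pt x' (f₂ x') ∈ X₁ := by
      rw [show pt x' (f₂ x') = q₂ from hx'eq]; exact hq₂X₁
    have h2 := mem₁ hmem
    have hx'0 : x' = 0 := by
      by_contra hx'0
      exact absurd h2.2.symm (hlt x' ⟨lt_of_le_of_ne hx'.1 (Ne.symm hx'0), hx'.2⟩).ne
    have hq₂0 : q₂ = 0 := by
      rw [← hx'eq, hx'0]; show pt 0 (f₂ 0) = 0; rw [h₂0, pt_zero]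
    have : Metric.infDist w X₂ = ‖w‖ := by
      rw [hq₂d, hq₂0, dist_zero_right]
    have hnw : x₀ ≤ ‖w‖ := by
      rw [hw]
      calc x₀ = |x₀| := (abs_of_pos hx0).symm
        _ ≤ ‖pt x₀ y₀‖ := abs_le_norm_pt x₀ y₀
    rw [this] at heq
    linarith [heq ▸ hdsmall]
  -- w is not in X
  have hwX : w ∉ X₁ ∪ X₂ := by
    rintro (h | h)
    · exact absurd (mem₁ h).2 hy₁.ne'
    · exact absurd (mem₂ h).2 hy₂.ne
  -- norm bound
  have hy0abs : |y₀| < δ/2 := by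
    rw [abs_lt]
    constructor
    · have := (abs_lt.mp he1).1; linarith
    · have := (abs_lt.mp he2).2; linarith
  have hnorm : ‖w‖ < δ := by
    calc ‖w‖ ≤ |x₀| + |y₀| := norm_pt_le x₀ y₀
      _ < δ/2 + δ/2 := by rw [abs_of_pos hx0]; linarith
      _ = δ := by ring
  exact ⟨w, ⟨hwX, q₁, hq₁near, q₂, hq₂near, hqne⟩, hnorm,
    x₀, y₀, hx0, by linarith, hy₁, hy₂, rfl⟩
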